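/- Quantitative (exponential) form of constant dwell-time stability: Let T̄ > 0 and suppose there exist ε > 0 and a continuously differentiable matrix-valued function S : [0,T̄] × 𝒫 → Sⁿ with S(τ,θ) positive definite for every (τ,θ) ∈ [0,T̄] × 𝒫, such that (i) ∂_τ S(τ,θ) + ∂_ρ S(τ,θ)μ + A(θ)ᵀS(τ,θ) + S(τ,θ)A(θ) + εIₙ ⪯ 0 for all θ ∈ 𝒫, all μ ∈ 𝒟ᵛ and all τ ∈ [0,T̄], and (ii) S(0,θ) − S(T̄,η) ⪯ 0 for all θ,η ∈ 𝒫. Set c₁ = min_{(τ,θ)∈[0,T̄]×𝒫} λ_min(S(τ,θ)) and c₂ = max_{(τ,θ)∈[0,T̄]×𝒫} λ_max(S(τ,θ)). Then for every parameter trajectory ρ with constant dwell-time T̄ and every solution x of ẋ(t) = A(ρ(t))x(t), one has ‖x(t)‖ ≤ √(c₂/c₁) · e^{−(ε/(2c₂)) t} ‖x(0)‖ for all t ≥ 0. -/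

import Mathlib

/-!
Statement 12: quantitative (exponential) form of the constant dwell-time
stability theorem: under the dwell-time LMI conditions, every solution
satisfies `‖x(t)‖ ≤ √(c₂/c₁) e^{−(ε/(2c₂)) t} ‖x(0)‖`, where
`c₁ = min λ_min(S(τ,θ))` and `c₂ = max λ_max(S(τ,θ))` over `[0,T̄] × 𝒫`.
(Here the Euclidean norm is written `‖x‖ = √(x ⬝ᵥ x)`.)
-/

attribute [local instance] Matrix.normedAddCommGroup Matrix.normedSpace

open Matrix Filter Set
open scoped Topology

noncomputable def entryCLM (n : ℕ) (i j : Fin n) :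
    Matrix (Fin n) (Fin n) ℝ →L[ℝ] ℝ :=
  (ContinuousLinearMap.proj j).comp
    (ContinuousLinearMap.proj (R := ℝ) (φ := fun _ : Fin n => Fin n → ℝ) i)

lemma entryCLM_apply {n : ℕ} (i j : Fin n) (M : Matrix (Fin n) (Fin n) ℝ) :
    entryCLM n i j M = M i j := rfl

lemma continuous_quadForm {n : ℕ} :
    Continuous (fun q : (Matrix (Fin n) (Fin n) ℝ) × (Fin n → ℝ) => q.2 ⬝ᵥ (q.1 *ᵥ q.2)) := by
  have : (fun q : (Matrix (Fin n) (Fin n) ℝ) × (Fin n → ℝ) => q.2 ⬝ᵥ (q.1 *ᵥ q.2))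
      = fun q => ∑ i, q.2 i * ∑ j, entryCLM n i j q.1 * q.2 j := by
    funext q; simp [dotProduct, mulVec, entryCLM_apply]
  rw [this]
  refine continuous_finset_sum _ fun i _ => Continuous.mul
    ((continuous_apply i).comp continuous_snd)
    (continuous_finset_sum _ fun j _ => Continuous.mul
      ((entryCLM n i j).continuous.comp continuous_fst)
      ((continuous_apply j).comp continuous_snd))

lemma dot_mulVec_left {n : ℕ} (B : Matrix (Fin n) (Fin n) ℝ) (w z : Fin n → ℝ) :
    (B *ᵥ w) ⬝ᵥ z = w ⬝ᵥ (Bᵀ *ᵥ z) := by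
  rw [dotProduct_mulVec w, vecMul_transpose]

lemma dotProduct_self_nonneg' {n : ℕ} (v : Fin n → ℝ) : 0 ≤ v ⬝ᵥ v :=
  Finset.sum_nonneg fun i _ => mul_self_nonneg (v i)

lemma quad_form_eq_sum {n : ℕ} (M : Matrix (Fin n) (Fin n) ℝ) (hM : M.IsHermitian)
    (v : Fin n → ℝ) :
    v ⬝ᵥ M *ᵥ v = ∑ i, hM.eigenvalues i * ((star (hM.eigenvectorUnitary : Matrix (Fin n) (Fin n) ℝ) *ᵥ v) i)^2 ∧
    v ⬝ᵥ v = ∑ i, ((star (hM.eigenvectorUnitary : Matrix (Fin n) (Fin n) ℝ) *ᵥ v) i)^2 := by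
  set U := (hM.eigenvectorUnitary : Matrix (Fin n) (Fin n) ℝ) with hU
  have hUU : U * star U = 1 := by
    exact (Matrix.mem_unitaryGroup_iff).mp hM.eigenvectorUnitary.2
  set w := star U *ᵥ v with hw
  constructor
  · conv_lhs => rw [hM.spectral_theorem, Unitary.conjStarAlgAut_apply]
    rw [← hU]
    have : (U * Matrix.diagonal (RCLike.ofReal ∘ hM.eigenvalues) * star U) *ᵥ v
        = U *ᵥ (Matrix.diagonal (RCLike.ofReal ∘ hM.eigenvalues) *ᵥ w) := by
      rw [hw, mulVec_mulVec, mulVec_mulVec]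
    rw [this]
    have hdot : v ⬝ᵥ (U *ᵥ (Matrix.diagonal (RCLike.ofReal ∘ hM.eigenvalues) *ᵥ w))
        = w ⬝ᵥ (Matrix.diagonal (RCLike.ofReal ∘ hM.eigenvalues) *ᵥ w) := by
      rw [dotProduct_mulVec, hw]
      congr 1
      rw [star_eq_conjTranspose, conjTranspose_eq_transpose_of_trivial, ← vecMul_transpose,
        transpose_transpose]
    rw [hdot]
    simp [dotProduct, Matrix.mulVec_diagonal, pow_two]
    exact Finset.sum_congr rfl fun i _ => by ring
  · have : w ⬝ᵥ w = v ⬝ᵥ v := by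
      rw [hw, dotProduct_mulVec]
      have : (star U *ᵥ v) ᵥ* star U = (U * star U) *ᵥ v := by
        rw [star_eq_conjTranspose, conjTranspose_eq_transpose_of_trivial, ← vecMul_transpose,
          transpose_transpose, vecMul_vecMul, ← mulVec_transpose, transpose_mul,
          transpose_transpose]
      rw [this, hUU, one_mulVec]
    rw [← this]
    simp [dotProduct, pow_two]

lemma rayleigh_upper {n : ℕ} (M : Matrix (Fin n) (Fin n) ℝ) (hM : M.IsHermitian)
    (v : Fin n → ℝ) : v ⬝ᵥ M *ᵥ v ≤ (⨆ i, hM.eigenvalues i) * (v ⬝ᵥ v) := by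
  obtain ⟨h1, h2⟩ := quad_form_eq_sum M hM v
  rw [h1, h2, Finset.mul_sum]
  rcases Nat.eq_zero_or_pos n with hn | hn
  · subst hn; simp
  · have : Nonempty (Fin n) := ⟨⟨0, hn⟩⟩
    exact Finset.sum_le_sum fun i _ =>
      mul_le_mul_of_nonneg_right (le_ciSup (Set.Finite.bddAbove (Set.finite_range _)) i)
        (sq_nonneg _)

lemma rayleigh_lower {n : ℕ} (M : Matrix (Fin n) (Fin n) ℝ) (hM : M.IsHermitian)
    (v : Fin n → ℝ) : (⨅ i, hM.eigenvalues i) * (v ⬝ᵥ v) ≤ v ⬝ᵥ M *ᵥ v := by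
  obtain ⟨h1, h2⟩ := quad_form_eq_sum M hM v
  rw [h1, h2, Finset.mul_sum]
  rcases Nat.eq_zero_or_pos n with hn | hn
  · subst hn; simp
  · have : Nonempty (Fin n) := ⟨⟨0, hn⟩⟩
    exact Finset.sum_le_sum fun i _ =>
      mul_le_mul_of_nonneg_right (ciInf_le (Set.Finite.bddBelow (Set.finite_range _)) i)
        (sq_nonneg _)

lemma unitSphere_compact {n : ℕ} (hn : 0 < n) :
    IsCompact {v : Fin n → ℝ | v ⬝ᵥ v = 1} ∧ {v : Fin n → ℝ | v ⬝ᵥ v = 1}.Nonempty := by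
  have hcont : Continuous fun v : Fin n → ℝ => v ⬝ᵥ v := by
    simp only [dotProduct]
    exact continuous_finset_sum _ fun i _ => (continuous_apply i).mul (continuous_apply i)
  have hclosed : IsClosed {v : Fin n → ℝ | v ⬝ᵥ v = 1} :=
    isClosed_eq hcont continuous_const
  constructor
  · apply (isCompact_closedBall (0 : Fin n → ℝ) 1).of_isClosed_subset hclosed
    intro v hv
    simp only [Metric.mem_closedBall, dist_zero_right]
    rw [pi_norm_le_iff_of_nonneg zero_le_one]
    intro i
    rw [Real.norm_eq_abs, abs_le_one_iff_mul_self_le_one]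
    calc v i * v i ≤ ∑ j, v j * v j :=
          Finset.single_le_sum (fun j _ => mul_self_nonneg (v j)) (Finset.mem_univ i)
      _ = 1 := hv
  · exact ⟨Pi.single ⟨0, hn⟩ 1, by simp [dotProduct, Pi.single_apply]⟩

lemma eigen_unit {n : ℕ} (M : Matrix (Fin n) (Fin n) ℝ) (hM : M.IsHermitian) (i : Fin n) :
    (⇑(hM.eigenvectorBasis i) ⬝ᵥ ⇑(hM.eigenvectorBasis i) = 1) ∧
    hM.eigenvalues i = ⇑(hM.eigenvectorBasis i) ⬝ᵥ (M *ᵥ ⇑(hM.eigenvectorBasis i)) := by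
  have hnorm : ‖hM.eigenvectorBasis i‖ = 1 := hM.eigenvectorBasis.orthonormal.1 i
  have hinner : (⇑(hM.eigenvectorBasis i) ⬝ᵥ ⇑(hM.eigenvectorBasis i)) = 1 := by
    have := real_inner_self_eq_norm_sq (hM.eigenvectorBasis i)
    rw [hnorm] at this
    simp only [one_pow] at this
    rw [← this, PiLp.inner_apply]
    simp [dotProduct, pow_two]
  refine ⟨hinner, ?_⟩
  have := hM.eigenvalues_eq i
  simpa [star_trivial] using this

lemma eig_bounds {n N : ℕ} (hn : 0 < n) {K : Set (ℝ × (Fin N → ℝ))}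
    (hK : IsCompact K) (hKne : K.Nonempty)
    {f : ℝ × (Fin N → ℝ) → Matrix (Fin n) (Fin n) ℝ} (hf : ContinuousOn f K)
    (hherm : ∀ p, (f p).IsHermitian) (hpd : ∀ p ∈ K, (f p).PosDef) :
    ∃ m Mx : ℝ, 0 < m ∧
      (∀ p ∈ K, ∀ i, m ≤ (hherm p).eigenvalues i ∧ (hherm p).eigenvalues i ≤ Mx) := by
  obtain ⟨hCc, hCne⟩ := unitSphere_compact (n := n) hn
  set C := {v : Fin n → ℝ | v ⬝ᵥ v = 1} with hC
  set Q : (ℝ × (Fin N → ℝ)) × (Fin n → ℝ) → ℝ := fun q => q.2 ⬝ᵥ (f q.1 *ᵥ q.2) with hQ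
  have hQcont : ContinuousOn Q (K ×ˢ C) := by
    have : Q = (fun q : (Matrix (Fin n) (Fin n) ℝ) × (Fin n → ℝ) => q.2 ⬝ᵥ (q.1 *ᵥ q.2)) ∘
        (fun q : (ℝ × (Fin N → ℝ)) × (Fin n → ℝ) => (f q.1, q.2)) := rfl
    rw [this]
    exact continuous_quadForm.comp_continuousOn
      ((hf.comp continuous_fst.continuousOn (fun q hq => hq.1)).prodMk
        continuous_snd.continuousOn)
  have hprodc : IsCompact (K ×ˢ C) := hK.prod hCc
  have hprodne : (K ×ˢ C).Nonempty := hKne.prod hCne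
  obtain ⟨q₀, hq₀, hq₀min⟩ := hprodc.exists_isMinOn hprodne hQcont
  obtain ⟨q₁, hq₁, hq₁max⟩ := hprodc.exists_isMaxOn hprodne hQcont
  refine ⟨Q q₀, Q q₁, ?_, ?_⟩
  · have hv0 : q₀.2 ≠ 0 := by
      intro h
      have := hq₀.2
      rw [hC] at this
      simp only [mem_setOf_eq, h] at this
      simp [dotProduct] at this
    have := (hpd q₀.1 hq₀.1).dotProduct_mulVec_pos hv0
    simpa [hQ, star_trivial] using this
  · intro p hp i
    obtain ⟨hunit, heig⟩ := eigen_unit (f p) (hherm p) i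
    have hmem : (p, ⇑((hherm p).eigenvectorBasis i)) ∈ K ×ˢ C := ⟨hp, hunit⟩
    exact ⟨by rw [heig]; exact hq₀min hmem, by rw [heig]; exact hq₁max hmem⟩

lemma hasDerivAt_quadForm {n : ℕ} {m : ℝ → Matrix (Fin n) (Fin n) ℝ}
    {x : ℝ → Fin n → ℝ} {m' : Matrix (Fin n) (Fin n) ℝ} {x' : Fin n → ℝ} {s : ℝ}
    (hm : HasDerivAt m m' s) (hx : HasDerivAt x x' s) :
    HasDerivAt (fun u => x u ⬝ᵥ (m u *ᵥ x u))
      (x' ⬝ᵥ (m s *ᵥ x s) + x s ⬝ᵥ (m' *ᵥ x s) + x s ⬝ᵥ (m s *ᵥ x')) s := by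
  have hmij : ∀ i j, HasDerivAt (fun u => m u i j) (m' i j) s := fun i j =>
    ((entryCLM n i j).hasFDerivAt.comp_hasDerivAt s hm)
  have hxi : ∀ i, HasDerivAt (fun u => x u i) (x' i) s := fun i =>
    ((ContinuousLinearMap.proj (R := ℝ) (φ := fun _ : Fin n => ℝ) i).hasFDerivAt.comp_hasDerivAt s hx)
  have key : HasDerivAt (fun u => ∑ i, ∑ j, x u i * (m u i j * x u j))
      (∑ i, ∑ j, (x' i * (m s i j * x s j) +
        x s i * (m' i j * x s j + m s i j * x' j))) s := by
    apply HasDerivAt.fun_sum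
    intro i _
    apply HasDerivAt.fun_sum
    intro j _
    exact (hxi i).mul ((hmij i j).mul (hxi j))
  have hfun : (fun u => x u ⬝ᵥ (m u *ᵥ x u)) = fun u => ∑ i, ∑ j, x u i * (m u i j * x u j) := by
    funext u
    simp [dotProduct, mulVec, Finset.mul_sum]
  rw [hfun]
  convert key using 1
  simp [dotProduct, mulVec, Finset.mul_sum, Finset.sum_add_distrib, mul_add, mul_assoc, add_assoc]

lemma vertex_reduction {n N : ℕ} (νlo νhi : Fin N → ℝ)
    (F : (ℝ × (Fin N → ℝ)) →L[ℝ] Matrix (Fin n) (Fin n) ℝ) (w : Fin n → ℝ)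
    {μ : Fin N → ℝ} (hμ : μ ∈ Set.Icc νlo νhi) :
    ∃ μs : Fin N → ℝ, (∀ i, μs i = νlo i ∨ μs i = νhi i) ∧
      w ⬝ᵥ (F (0, μ) *ᵥ w) ≤ w ⬝ᵥ (F (0, μs) *ᵥ w) := by
  set L : (Fin N → ℝ) →ₗ[ℝ] ℝ :=
    { toFun := fun ν => w ⬝ᵥ (F (0, ν) *ᵥ w)
      map_add' := by
        intro a b
        have h : ((0:ℝ), a + b) = ((0:ℝ), a) + ((0:ℝ), b) := by simp [Prod.ext_iff]
        rw [h, map_add, add_mulVec, dotProduct_add]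
      map_smul' := by
        intro c a
        have h : ((0:ℝ), c • a) = c • ((0:ℝ), a) := by simp [Prod.ext_iff]
        rw [h, _root_.map_smul, smul_mulVec, dotProduct_smul]
        rfl } with hL
  have hLdef : ∀ ν, L ν = w ⬝ᵥ (F (0, ν) *ᵥ w) := fun ν => rfl
  refine ⟨fun i => if 0 ≤ L (fun j => if i = j then 1 else 0) then νhi i else νlo i,
    fun i => by by_cases h : 0 ≤ L (fun j => if i = j then 1 else 0) <;> simp [h], ?_⟩
  rw [← hLdef, ← hLdef, L.pi_apply_eq_sum_univ μ, L.pi_apply_eq_sum_univ]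
  apply Finset.sum_le_sum
  intro i _
  by_cases h : 0 ≤ L (fun j => if i = j then 1 else 0)
  · simp only [h, if_true, smul_eq_mul]
    exact mul_le_mul_of_nonneg_right (hμ.2 i) h
  · simp only [h, if_false, smul_eq_mul]
    exact mul_le_mul_of_nonpos_right (hμ.1 i) (le_of_not_ge h)

set_option maxHeartbeats 2000000 in
theorem constant_dwell_time_exponential_stability
    {n N : ℕ}
    -- the parameter box 𝒫 = [ρlo, ρhi] and the derivative box 𝒟 = [νlo, νhi]
    (ρlo ρhi νlo νhi : Fin N → ℝ)
    (hbox : ρlo ≤ ρhi) (hνbox : νlo ≤ νhi)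
    -- the system matrix, continuous (hence bounded) on the compact box 𝒫
    (A : (Fin N → ℝ) → Matrix (Fin n) (Fin n) ℝ)
    (hA : ContinuousOn A (Icc ρlo ρhi))
    -- the dwell-time
    (T : ℝ) (hT : 0 < T)
    -- the Lyapunov certificate
    (ε : ℝ) (hε : 0 < ε)
    (S : ℝ → (Fin N → ℝ) → Matrix (Fin n) (Fin n) ℝ)
    (hS_c1 : ContDiff ℝ 1 (fun p : ℝ × (Fin N → ℝ) => S p.1 p.2))
    (hS_herm : ∀ τ θ, (S τ θ).IsHermitian)
    (hS_pd : ∀ τ ∈ Icc (0 : ℝ) T, ∀ θ ∈ Icc ρlo ρhi, (S τ θ).PosDef)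
    -- condition (i): ∂_τ S + ∂_ρ S μ + AᵀS + SA + εI ⪯ 0 on [0,T̄] × 𝒫 × 𝒟ᵛ
    (hflow : ∀ τ ∈ Icc (0 : ℝ) T, ∀ θ ∈ Icc ρlo ρhi,
      ∀ μ : Fin N → ℝ, (∀ i, μ i = νlo i ∨ μ i = νhi i) →
      (-(fderiv ℝ (fun p : ℝ × (Fin N → ℝ) => S p.1 p.2) (τ, θ) (1, 0)
          + fderiv ℝ (fun p : ℝ × (Fin N → ℝ) => S p.1 p.2) (τ, θ) (0, μ)
          + (A θ)ᵀ * S τ θ + S τ θ * A θ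
          + ε • (1 : Matrix (Fin n) (Fin n) ℝ))).PosSemidef)
    -- condition (ii): S(0,θ) − S(T̄,η) ⪯ 0 on 𝒫 × 𝒫
    (hjump : ∀ θ ∈ Icc ρlo ρhi, ∀ η ∈ Icc ρlo ρhi, (S T η - S 0 θ).PosSemidef)
    -- c₁ = min λ_min(S(τ,θ)) and c₂ = max λ_max(S(τ,θ)) over [0,T̄] × 𝒫
    (c₁ c₂ : ℝ)
    (hc₁ : c₁ = sInf {r : ℝ | ∃ τ ∈ Icc (0 : ℝ) T, ∃ θ ∈ Icc ρlo ρhi,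
      r = ⨅ i, (hS_herm τ θ).eigenvalues i})
    (hc₂ : c₂ = sSup {r : ℝ | ∃ τ ∈ Icc (0 : ℝ) T, ∃ θ ∈ Icc ρlo ρhi,
      r = ⨆ i, (hS_herm τ θ).eigenvalues i})
    -- a parameter trajectory with constant dwell-time T̄ (jump times t_k = k T̄)
    (ρ ρ' : ℝ → Fin N → ℝ)
    (hρP : ∀ t ≥ (0 : ℝ), ρ t ∈ Icc ρlo ρhi)
    (hρleft : ∀ t > (0 : ℝ), Tendsto ρ (nhdsWithin t (Iio t)) (nhds (ρ t)))
    (hρdiff : ∀ k : ℕ, ∀ t ∈ Ioo ((k : ℝ) * T) (((k : ℝ) + 1) * T),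
      HasDerivAt ρ (ρ' t) t ∧ ρ' t ∈ Icc νlo νhi)
    -- a solution of the LPV system
    (x : ℝ → Fin n → ℝ)
    (hxcont : ContinuousOn x (Ici 0))
    (hxdiff : ∀ t ≥ (0 : ℝ), (∀ k : ℕ, 1 ≤ k → t ≠ (k : ℝ) * T) →
      HasDerivWithinAt x ((A (ρ t)).mulVec (x t)) (Ici 0) t) :
    ∀ t ≥ (0 : ℝ),
      Real.sqrt (x t ⬝ᵥ x t) ≤
        Real.sqrt (c₂ / c₁) * Real.exp (-(ε / (2 * c₂)) * t) * Real.sqrt (x 0 ⬝ᵥ x 0) := by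
  intro t ht
  rcases Nat.eq_zero_or_pos n with hn0 | hn
  · subst hn0
    simp [dotProduct]
  have hNE : Nonempty (Fin n) := ⟨⟨0, hn⟩⟩
  have i₀ : Fin n := ⟨0, hn⟩
  -- compactness and eigenvalue bounds
  have hKc : IsCompact ((Icc (0:ℝ) T) ×ˢ (Icc ρlo ρhi)) := isCompact_Icc.prod isCompact_Icc
  have hKne : ((Icc (0:ℝ) T) ×ˢ (Icc ρlo ρhi)).Nonempty :=
    ⟨(0, ρlo), ⟨left_mem_Icc.2 hT.le, left_mem_Icc.2 hbox⟩⟩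
  have hfc : Continuous (fun p : ℝ × (Fin N → ℝ) => S p.1 p.2) := hS_c1.continuous
  have hherm' : ∀ p : ℝ × (Fin N → ℝ), (S p.1 p.2).IsHermitian := fun p => hS_herm p.1 p.2
  obtain ⟨m, Mx, hm, hbounds⟩ := eig_bounds (N := N) hn hKc hKne hfc.continuousOn hherm'
    (fun p hp => hS_pd p.1 hp.1 p.2 hp.2)
  have heig : ∀ τ ∈ Icc (0:ℝ) T, ∀ θ ∈ Icc ρlo ρhi, ∀ i,
      m ≤ (hS_herm τ θ).eigenvalues i ∧ (hS_herm τ θ).eigenvalues i ≤ Mx :=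
    fun τ hτ θ hθ i => hbounds (τ, θ) ⟨hτ, hθ⟩ i
  have h0T : (0:ℝ) ∈ Icc (0:ℝ) T := left_mem_Icc.2 hT.le
  have hρloP : ρlo ∈ Icc ρlo ρhi := left_mem_Icc.2 hbox
  -- c₁, c₂ facts
  have hlb₁ : ∀ r ∈ {r : ℝ | ∃ τ ∈ Icc (0 : ℝ) T, ∃ θ ∈ Icc ρlo ρhi,
      r = ⨅ i, (hS_herm τ θ).eigenvalues i}, m ≤ r := by
    rintro r ⟨τ, hτ, θ, hθ, rfl⟩
    exact le_ciInf fun i => (heig τ hτ θ hθ i).1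
  have hub₂ : ∀ r ∈ {r : ℝ | ∃ τ ∈ Icc (0 : ℝ) T, ∃ θ ∈ Icc ρlo ρhi,
      r = ⨆ i, (hS_herm τ θ).eigenvalues i}, r ≤ Mx := by
    rintro r ⟨τ, hτ, θ, hθ, rfl⟩
    exact ciSup_le fun i => (heig τ hτ θ hθ i).2
  have hc₁_ge : m ≤ c₁ := by
    rw [hc₁]
    exact le_csInf ⟨_, ⟨0, h0T, ρlo, hρloP, rfl⟩⟩ hlb₁
  have hc₁pos : 0 < c₁ := lt_of_lt_of_le hm hc₁_ge
  have hc₁_le : ∀ τ ∈ Icc (0:ℝ) T, ∀ θ ∈ Icc ρlo ρhi,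
      c₁ ≤ ⨅ i, (hS_herm τ θ).eigenvalues i := by
    intro τ hτ θ hθ
    rw [hc₁]
    exact csInf_le ⟨m, hlb₁⟩ ⟨τ, hτ, θ, hθ, rfl⟩
  have hc₂_ge : ∀ τ ∈ Icc (0:ℝ) T, ∀ θ ∈ Icc ρlo ρhi,
      (⨆ i, (hS_herm τ θ).eigenvalues i) ≤ c₂ := by
    intro τ hτ θ hθ
    rw [hc₂]
    exact le_csSup ⟨Mx, hub₂⟩ ⟨τ, hτ, θ, hθ, rfl⟩
  have hc₂pos : 0 < c₂ := by
    have h1 : m ≤ (hS_herm 0 ρlo).eigenvalues i₀ := (heig 0 h0T ρlo hρloP i₀).1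
    have h2 : (hS_herm 0 ρlo).eigenvalues i₀ ≤ ⨆ i, (hS_herm 0 ρlo).eigenvalues i :=
      le_ciSup (Set.Finite.bddAbove (Set.finite_range _)) i₀
    linarith [hc₂_ge 0 h0T ρlo hρloP]
  have hc₁c₂ : c₁ ≤ c₂ := by
    have h1 : c₁ ≤ ⨅ i, (hS_herm 0 ρlo).eigenvalues i := hc₁_le 0 h0T ρlo hρloP
    have h2 : (⨅ i, (hS_herm 0 ρlo).eigenvalues i) ≤ (hS_herm 0 ρlo).eigenvalues i₀ :=
      ciInf_le (Set.Finite.bddBelow (Set.finite_range _)) i₀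
    have h3 : (hS_herm 0 ρlo).eigenvalues i₀ ≤ ⨆ i, (hS_herm 0 ρlo).eigenvalues i :=
      le_ciSup (Set.Finite.bddAbove (Set.finite_range _)) i₀
    linarith [hc₂_ge 0 h0T ρlo hρloP]
  have hquad_hi : ∀ τ ∈ Icc (0:ℝ) T, ∀ θ ∈ Icc ρlo ρhi, ∀ v : Fin n → ℝ,
      v ⬝ᵥ (S τ θ *ᵥ v) ≤ c₂ * (v ⬝ᵥ v) := fun τ hτ θ hθ v =>
    (rayleigh_upper _ (hS_herm τ θ) v).trans
      (mul_le_mul_of_nonneg_right (hc₂_ge τ hτ θ hθ) (dotProduct_self_nonneg' v))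
  have hquad_lo : ∀ τ ∈ Icc (0:ℝ) T, ∀ θ ∈ Icc ρlo ρhi, ∀ v : Fin n → ℝ,
      c₁ * (v ⬝ᵥ v) ≤ v ⬝ᵥ (S τ θ *ᵥ v) := fun τ hτ θ hθ v =>
    le_trans (mul_le_mul_of_nonneg_right (hc₁_le τ hτ θ hθ) (dotProduct_self_nonneg' v))
      (rayleigh_lower _ (hS_herm τ θ) v)
  -- trajectory facts
  have hkT_nonneg : ∀ k : ℕ, (0:ℝ) ≤ (k:ℝ)*T := fun k => mul_nonneg (Nat.cast_nonneg k) hT.le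
  have hxCA : ∀ s : ℝ, 0 < s → ContinuousAt x s := fun s hs =>
    hxcont.continuousAt (Ici_mem_nhds hs)
  have hxderiv : ∀ k : ℕ, ∀ s ∈ Ioo ((k:ℝ)*T) (((k:ℝ)+1)*T),
      HasDerivAt x (A (ρ s) *ᵥ x s) s := by
    intro k s hs
    have hs0 : 0 < s := lt_of_le_of_lt (hkT_nonneg k) hs.1
    have hjf : ∀ j : ℕ, 1 ≤ j → s ≠ (j:ℝ)*T := by
      intro j _ heq
      rw [heq] at hs
      have h1 : (k:ℝ) < j := lt_of_mul_lt_mul_right hs.1 hT.le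
      have h2 : (j:ℝ) < (k:ℝ)+1 := lt_of_mul_lt_mul_right hs.2 hT.le
      have h1' : k < j := by exact_mod_cast h1
      have h2' : j < k+1 := by exact_mod_cast h2
      omega
    exact (hxdiff s hs0.le hjf).hasDerivAt (Ici_mem_nhds hs0)
  -- Lyapunov function
  set Vk : ℕ → ℝ → ℝ := fun k u => x u ⬝ᵥ (S (u - (k:ℝ)*T) (ρ u) *ᵥ x u) with hVkdef
  set g : ℕ → ℝ → ℝ := fun k u => Real.exp (ε/c₂ * u) * Vk k u with hgdef
  -- derivative of g on each open interval
  have hgderiv : ∀ k : ℕ, ∀ s ∈ Ioo ((k:ℝ)*T) (((k:ℝ)+1)*T),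
      ∃ d, HasDerivAt (g k) d s ∧ d ≤ 0 := by
    intro k s hs
    have hs0 : 0 < s := lt_of_le_of_lt (hkT_nonneg k) hs.1
    obtain ⟨hρd, hρ'mem⟩ := hρdiff k s hs
    have hx' := hxderiv k s hs
    have hτmem : s - (k:ℝ)*T ∈ Icc (0:ℝ) T := ⟨by linarith [hs.1], by linarith [hs.2]⟩
    have hθmem : ρ s ∈ Icc ρlo ρhi := hρP s hs0.le
    have hp : HasDerivAt (fun u : ℝ => ((u - (k:ℝ)*T : ℝ), ρ u)) ((1:ℝ), ρ' s) s :=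
      ((hasDerivAt_id s).sub_const _).prodMk hρd
    have hfd : HasFDerivAt (fun p : ℝ × (Fin N → ℝ) => S p.1 p.2)
        (fderiv ℝ (fun p : ℝ × (Fin N → ℝ) => S p.1 p.2) (s - (k:ℝ)*T, ρ s))
        (s - (k:ℝ)*T, ρ s) :=
      (hS_c1.differentiable one_ne_zero _).hasFDerivAt
    have hM : HasDerivAt (fun u => S (u - (k:ℝ)*T) (ρ u))
        (fderiv ℝ (fun p : ℝ × (Fin N → ℝ) => S p.1 p.2) (s - (k:ℝ)*T, ρ s) (1, ρ' s)) s :=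
      HasFDerivAt.comp_hasDerivAt (f := fun u : ℝ => ((u - (k:ℝ)*T : ℝ), ρ u)) s hfd hp
    set w := x s with hw
    set F := fderiv ℝ (fun p : ℝ × (Fin N → ℝ) => S p.1 p.2) (s - (k:ℝ)*T, ρ s) with hF
    set Ms := S (s - (k:ℝ)*T) (ρ s) with hMs
    have hV : HasDerivAt (Vk k)
        ((A (ρ s) *ᵥ w) ⬝ᵥ (Ms *ᵥ w) + w ⬝ᵥ (F (1, ρ' s) *ᵥ w) + w ⬝ᵥ (Ms *ᵥ (A (ρ s) *ᵥ w))) s :=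
      hasDerivAt_quadForm hM hx'
    have hexp : HasDerivAt (fun u => Real.exp (ε/c₂*u)) (Real.exp (ε/c₂*s) * (ε/c₂)) s := by
      simpa using (((hasDerivAt_id s).const_mul (ε/c₂)).exp)
    have hgd : HasDerivAt (g k)
        (Real.exp (ε/c₂*s) * (ε/c₂) * Vk k s +
          Real.exp (ε/c₂*s) *
            ((A (ρ s) *ᵥ w) ⬝ᵥ (Ms *ᵥ w) + w ⬝ᵥ (F (1, ρ' s) *ᵥ w) +
              w ⬝ᵥ (Ms *ᵥ (A (ρ s) *ᵥ w)))) s := hexp.mul hV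
    refine ⟨_, hgd, ?_⟩
    -- now show the derivative is ≤ 0
    obtain ⟨μs, hμsvert, hμsle⟩ := vertex_reduction νlo νhi F w hρ'mem
    have hPSD := hflow (s - (k:ℝ)*T) hτmem (ρ s) hθmem μs hμsvert
    have hq0 := hPSD.dotProduct_mulVec_nonneg w
    rw [star_trivial] at hq0
    have hq' : w ⬝ᵥ ((F (1,0) + F (0,μs) + (A (ρ s))ᵀ * Ms + Ms * A (ρ s)
        + ε • (1 : Matrix (Fin n) (Fin n) ℝ)) *ᵥ w) ≤ 0 := by
      rw [neg_mulVec, dotProduct_neg] at hq0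
      linarith
    have hexpand : w ⬝ᵥ ((F (1,0) + F (0,μs) + (A (ρ s))ᵀ * Ms + Ms * A (ρ s)
        + ε • (1 : Matrix (Fin n) (Fin n) ℝ)) *ᵥ w)
        = w ⬝ᵥ (F (1,0) *ᵥ w) + w ⬝ᵥ (F (0,μs) *ᵥ w) + w ⬝ᵥ (((A (ρ s))ᵀ * Ms) *ᵥ w)
          + w ⬝ᵥ ((Ms * A (ρ s)) *ᵥ w) + ε * (w ⬝ᵥ w) := by
      rw [add_mulVec, add_mulVec, add_mulVec, add_mulVec, dotProduct_add, dotProduct_add,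
        dotProduct_add, dotProduct_add, smul_mulVec, one_mulVec, dotProduct_smul,
        smul_eq_mul]
    have hdv1 : (A (ρ s) *ᵥ w) ⬝ᵥ (Ms *ᵥ w) = w ⬝ᵥ (((A (ρ s))ᵀ * Ms) *ᵥ w) := by
      rw [dot_mulVec_left, mulVec_mulVec]
    have hdv3 : w ⬝ᵥ (Ms *ᵥ (A (ρ s) *ᵥ w)) = w ⬝ᵥ ((Ms * A (ρ s)) *ᵥ w) := by
      rw [mulVec_mulVec]
    have hDsplit : w ⬝ᵥ (F (1, ρ' s) *ᵥ w)
        = w ⬝ᵥ (F (1,0) *ᵥ w) + w ⬝ᵥ (F (0, ρ' s) *ᵥ w) := by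
      have h : ((1:ℝ), ρ' s) = ((1:ℝ), (0 : Fin N → ℝ)) + ((0:ℝ), ρ' s) := by
        simp [Prod.ext_iff]
      rw [h, map_add, add_mulVec, dotProduct_add]
    have hVs : Vk k s = w ⬝ᵥ (Ms *ᵥ w) := rfl
    have hVupper : w ⬝ᵥ (Ms *ᵥ w) ≤ c₂ * (w ⬝ᵥ w) := hquad_hi _ hτmem _ hθmem w
    have h1 : (ε/c₂) * (w ⬝ᵥ (Ms *ᵥ w)) ≤ ε * (w ⬝ᵥ w) := by
      have h2 := mul_le_mul_of_nonneg_left hVupper (le_of_lt (div_pos hε hc₂pos))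
      calc (ε/c₂) * (w ⬝ᵥ (Ms *ᵥ w)) ≤ (ε/c₂) * (c₂ * (w ⬝ᵥ w)) := h2
        _ = ε * (w ⬝ᵥ w) := by field_simp
    have hsum : (ε/c₂) * Vk k s +
        ((A (ρ s) *ᵥ w) ⬝ᵥ (Ms *ᵥ w) + w ⬝ᵥ (F (1, ρ' s) *ᵥ w) +
          w ⬝ᵥ (Ms *ᵥ (A (ρ s) *ᵥ w))) ≤ 0 := by
      rw [hVs, hdv1, hdv3, hDsplit]
      linarith [hμsle, hq', hexpand, h1]
    have hexp_pos : (0:ℝ) < Real.exp (ε/c₂*s) := Real.exp_pos _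
    calc Real.exp (ε/c₂*s) * (ε/c₂) * Vk k s +
          Real.exp (ε/c₂*s) *
            ((A (ρ s) *ᵥ w) ⬝ᵥ (Ms *ᵥ w) + w ⬝ᵥ (F (1, ρ' s) *ᵥ w) +
              w ⬝ᵥ (Ms *ᵥ (A (ρ s) *ᵥ w)))
        = Real.exp (ε/c₂*s) * ((ε/c₂) * Vk k s +
            ((A (ρ s) *ᵥ w) ⬝ᵥ (Ms *ᵥ w) + w ⬝ᵥ (F (1, ρ' s) *ᵥ w) +
              w ⬝ᵥ (Ms *ᵥ (A (ρ s) *ᵥ w)))) := by ring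
      _ ≤ 0 := mul_nonpos_iff.2 (Or.inl ⟨hexp_pos.le, hsum⟩)
  -- continuity of g on each Ioc
  have hgcont : ∀ k : ℕ, ContinuousOn (g k) (Ioc ((k:ℝ)*T) (((k:ℝ)+1)*T)) := by
    intro k
    have hb0 : (0:ℝ) < ((k:ℝ)+1)*T := by positivity
    have hρcont : ContinuousOn ρ (Ioc ((k:ℝ)*T) (((k:ℝ)+1)*T)) := by
      intro s hs
      rcases eq_or_lt_of_le hs.2 with heq | hlt
      · have h1 : ContinuousWithinAt ρ (Iio s) s := by
          rw [heq]; exact hρleft _ hb0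
        have h2 : ContinuousWithinAt ρ (insert s (Iio s)) s :=
          continuousWithinAt_insert_self.2 h1
        exact h2.mono (fun y hy => by
          rcases eq_or_lt_of_le hy.2 with h | h
          · left; rw [h, heq]
          · right; exact lt_of_lt_of_le h (le_of_eq heq.symm))
      · exact ((hρdiff k s ⟨hs.1, hlt⟩).1.continuousAt).continuousWithinAt
    have hxc : ContinuousOn x (Ioc ((k:ℝ)*T) (((k:ℝ)+1)*T)) :=
      hxcont.mono (fun y hy => le_of_lt (lt_of_le_of_lt (hkT_nonneg k) hy.1))
    have hMc : ContinuousOn (fun u => S (u - (k:ℝ)*T) (ρ u)) (Ioc ((k:ℝ)*T) (((k:ℝ)+1)*T)) :=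
      hfc.comp_continuousOn
        (((continuous_id.sub continuous_const).continuousOn).prodMk hρcont)
    have hVc : ContinuousOn (Vk k) (Ioc ((k:ℝ)*T) (((k:ℝ)+1)*T)) := by
      have hrepr : (Vk k) = (fun q : (Matrix (Fin n) (Fin n) ℝ) × (Fin n → ℝ) =>
          q.2 ⬝ᵥ (q.1 *ᵥ q.2)) ∘ (fun u => (S (u - (k:ℝ)*T) (ρ u), x u)) := rfl
      rw [hrepr]
      exact continuous_quadForm.comp_continuousOn (hMc.prodMk hxc)
    exact ((Real.continuous_exp.comp (continuous_const.mul continuous_id)).continuousOn).mul hVc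

  have hAnti : ∀ k : ℕ, AntitoneOn (g k) (Ioc ((k:ℝ)*T) (((k:ℝ)+1)*T)) := by
    intro k
    apply antitoneOn_of_deriv_nonpos (convex_Ioc _ _) (hgcont k)
    · intro s hs
      rw [interior_Ioc] at hs
      obtain ⟨d, hd, _⟩ := hgderiv k s hs
      exact hd.differentiableAt.differentiableWithinAt
    · intro s hs
      rw [interior_Ioc] at hs
      obtain ⟨d, hd, hdle⟩ := hgderiv k s hs
      rw [hd.deriv]
      exact hdle
  -- main induction
  have hJ : ∀ k : ℕ, ∀ t' ∈ Ioc ((k:ℝ)*T) (((k:ℝ)+1)*T), g k t' ≤ c₂ * (x 0 ⬝ᵥ x 0) := by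
    intro k
    induction k with
    | zero =>
      intro t' ht'
      simp only [Nat.cast_zero, zero_mul, zero_add, one_mul] at ht'
      have hA0 := hAnti 0
      simp only [Nat.cast_zero, zero_mul, zero_add, one_mul] at hA0
      haveI hne : (𝓝[Ioo (0:ℝ) t'] (0:ℝ)).NeBot := by
        apply mem_closure_iff_nhdsWithin_neBot.mp
        rw [closure_Ioo (ne_of_lt ht'.1)]
        exact ⟨le_refl 0, ht'.1.le⟩
      have hdc : Continuous fun v : Fin n → ℝ => v ⬝ᵥ v := by
        simp only [dotProduct]
        exact continuous_finset_sum _ fun i _ => (continuous_apply i).mul (continuous_apply i)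
      have hev : ∀ᶠ s in 𝓝[Ioo (0:ℝ) t'] (0:ℝ),
          g 0 t' ≤ Real.exp (ε/c₂*s) * (c₂ * (x s ⬝ᵥ x s)) := by
        filter_upwards [self_mem_nhdsWithin] with s hs
        have hsIoc : s ∈ Ioc (0:ℝ) T := ⟨hs.1, hs.2.le.trans ht'.2⟩
        have h1 : g 0 t' ≤ g 0 s := hA0 hsIoc ht' hs.2.le
        have h2 : g 0 s ≤ Real.exp (ε/c₂*s) * (c₂ * (x s ⬝ᵥ x s)) := by
          have hV : Vk 0 s ≤ c₂ * (x s ⬝ᵥ x s) := by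
            have hq := hquad_hi s ⟨hs.1.le, hsIoc.2⟩ (ρ s) (hρP s hs.1.le) (x s)
            simpa [hVkdef] using hq
          exact mul_le_mul_of_nonneg_left hV (Real.exp_pos _).le
        exact h1.trans h2
      have hlim : Tendsto (fun s => Real.exp (ε/c₂*s) * (c₂ * (x s ⬝ᵥ x s)))
          (𝓝[Ioo (0:ℝ) t'] (0:ℝ))
          (𝓝 (Real.exp (ε/c₂*0) * (c₂ * (x 0 ⬝ᵥ x 0)))) := by
        apply Tendsto.mul
        · exact ((Real.continuous_exp.comp (continuous_const.mul continuous_id)).tendsto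
            (0:ℝ)).mono_left nhdsWithin_le_nhds
        · apply Tendsto.const_mul
          have hx0 : Tendsto x (𝓝[Ioo (0:ℝ) t'] (0:ℝ)) (𝓝 (x 0)) :=
            (hxcont 0 (self_mem_Ici)).mono_left (nhdsWithin_mono 0 (fun y hy => hy.1.le))
          exact (hdc.tendsto (x 0)).comp hx0
      have := ge_of_tendsto hlim hev
      simpa using this

    | succ k ih =>
      intro t' ht'
      have hcast : ((k+1 : ℕ):ℝ) = (k:ℝ)+1 := by push_cast; ring
      rw [hcast] at ht'
      set t₁ : ℝ := ((k:ℝ)+1)*T with ht₁def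
      have ht₁pos : 0 < t₁ := by positivity
      have ht₂ : t₁ < ((k:ℝ)+1+1)*T := by
        rw [ht₁def]; nlinarith [hT, Nat.cast_nonneg (α := ℝ) k]
      have hVk1 : ∀ u, Vk (k+1) u = x u ⬝ᵥ (S (u - t₁) (ρ u) *ᵥ x u) := by
        intro u; simp only [hVkdef]; rw [hcast]
      have hC : ∀ s ∈ Ioo t₁ (((k:ℝ)+1+1)*T), ‖ρ' s‖₊ ≤ ‖νlo‖₊ + ‖νhi‖₊ := by
        intro s hs
        have hmem := (hρdiff (k+1) s (by rw [hcast]; exact hs)).2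
        rw [← NNReal.coe_le_coe]
        push_cast
        rw [pi_norm_le_iff_of_nonneg (by positivity)]
        intro i
        have h1 := hmem.1 i
        have h2 := hmem.2 i
        have h3 : |νlo i| ≤ ‖νlo‖ := by simpa using norm_le_pi_norm νlo i
        have h4 : |νhi i| ≤ ‖νhi‖ := by simpa using norm_le_pi_norm νhi i
        rw [Real.norm_eq_abs, abs_le]
        constructor
        · have := neg_abs_le (νlo i)
          have hν2 := norm_nonneg νhi
          linarith
        · have := le_abs_self (νhi i)
          have hν1 := norm_nonneg νlo
          linarith
      have hlip : LipschitzOnWith (‖νlo‖₊ + ‖νhi‖₊) ρ (Ioo t₁ (((k:ℝ)+1+1)*T)) :=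
        (convex_Ioo _ _).lipschitzOnWith_of_nnnorm_hasDerivWithin_le
          (f' := ρ')
          (fun s hs => ((hρdiff (k+1) s (by rw [hcast]; exact hs)).1).hasDerivWithinAt) hC
      obtain ⟨G, hGlip, hGeq⟩ := hlip.extend_pi
      haveI hne1 : (𝓝[Ioo t₁ (((k:ℝ)+1+1)*T)] t₁).NeBot := by
        apply mem_closure_iff_nhdsWithin_neBot.mp
        rw [closure_Ioo (ne_of_lt ht₂)]
        exact ⟨le_refl _, ht₂.le⟩
      have hGtend : Tendsto G (𝓝[Ioo t₁ (((k:ℝ)+1+1)*T)] t₁) (𝓝 (G t₁)) :=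
        (hGlip.continuous.tendsto t₁).mono_left nhdsWithin_le_nhds
      have heqG : G =ᶠ[𝓝[Ioo t₁ (((k:ℝ)+1+1)*T)] t₁] ρ := by
        filter_upwards [self_mem_nhdsWithin] with s hs
        exact (hGeq hs).symm
      have hρtend : Tendsto ρ (𝓝[Ioo t₁ (((k:ℝ)+1+1)*T)] t₁) (𝓝 (G t₁)) :=
        Filter.Tendsto.congr' heqG hGtend
      have hLmem : G t₁ ∈ Icc ρlo ρhi := by
        apply isClosed_Icc.mem_of_tendsto hρtend
        filter_upwards [self_mem_nhdsWithin] with s hs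
        exact hρP s (le_of_lt (lt_trans ht₁pos hs.1))
      haveI hne2 : (𝓝[Ioo t₁ t'] t₁).NeBot := by
        apply mem_closure_iff_nhdsWithin_neBot.mp
        rw [closure_Ioo (ne_of_lt ht'.1)]
        exact ⟨le_refl _, ht'.1.le⟩
      have hsub : Ioo t₁ t' ⊆ Ioo t₁ (((k:ℝ)+1+1)*T) :=
        fun y hy => ⟨hy.1, lt_of_lt_of_le hy.2 ht'.2⟩
      have hρtend2 : Tendsto ρ (𝓝[Ioo t₁ t'] t₁) (𝓝 (G t₁)) :=
        hρtend.mono_left (nhdsWithin_mono _ hsub)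
      have hxt1 : Tendsto x (𝓝[Ioo t₁ t'] t₁) (𝓝 (x t₁)) :=
        ((hxCA t₁ ht₁pos).tendsto).mono_left nhdsWithin_le_nhds
      have hτtend : Tendsto (fun u : ℝ => u - t₁) (𝓝[Ioo t₁ t'] t₁) (𝓝 0) := by
        have h : Tendsto (fun u : ℝ => u - t₁) (𝓝 t₁) (𝓝 (t₁ - t₁)) :=
          (continuous_id.sub continuous_const).tendsto t₁
        rw [sub_self] at h
        exact h.mono_left nhdsWithin_le_nhds
      have hMtend : Tendsto (fun u => S (u - t₁) (ρ u)) (𝓝[Ioo t₁ t'] t₁)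
          (𝓝 (S 0 (G t₁))) :=
        (hfc.tendsto ((0:ℝ), G t₁)).comp (hτtend.prodMk_nhds hρtend2)
      have hVtend : Tendsto (fun u => x u ⬝ᵥ (S (u - t₁) (ρ u) *ᵥ x u)) (𝓝[Ioo t₁ t'] t₁)
          (𝓝 (x t₁ ⬝ᵥ (S 0 (G t₁) *ᵥ x t₁))) :=
        (continuous_quadForm.tendsto (S 0 (G t₁), x t₁)).comp (hMtend.prodMk_nhds hxt1)
      have hexptend : Tendsto (fun u => Real.exp (ε/c₂*u)) (𝓝[Ioo t₁ t'] t₁)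
          (𝓝 (Real.exp (ε/c₂*t₁))) :=
        ((Real.continuous_exp.comp (continuous_const.mul continuous_id)).tendsto t₁).mono_left
          nhdsWithin_le_nhds
      have hΦtend := hexptend.mul hVtend
      have hA1 := hAnti (k+1)
      rw [hcast] at hA1
      have hev : ∀ᶠ s in 𝓝[Ioo t₁ t'] t₁,
          g (k+1) t' ≤ Real.exp (ε/c₂*s) * (x s ⬝ᵥ (S (s - t₁) (ρ s) *ᵥ x s)) := by
        filter_upwards [self_mem_nhdsWithin] with s hs
        have h1 : g (k+1) t' ≤ g (k+1) s := hA1 ⟨hs.1, hs.2.le.trans ht'.2⟩ ht' hs.2.le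
        have h2 : g (k+1) s = Real.exp (ε/c₂*s) * (x s ⬝ᵥ (S (s - t₁) (ρ s) *ᵥ x s)) := by
          simp only [hgdef]; rw [hVk1 s]
        linarith [h1, le_of_eq h2]
      have hlimle : g (k+1) t' ≤ Real.exp (ε/c₂*t₁) * (x t₁ ⬝ᵥ (S 0 (G t₁) *ᵥ x t₁)) :=
        ge_of_tendsto hΦtend hev
      have hjmp : x t₁ ⬝ᵥ (S 0 (G t₁) *ᵥ x t₁) ≤ x t₁ ⬝ᵥ (S T (ρ t₁) *ᵥ x t₁) := by
        have h := (hjump (G t₁) hLmem (ρ t₁) (hρP t₁ ht₁pos.le)).dotProduct_mulVec_nonneg (x t₁)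
        rw [star_trivial, sub_mulVec, dotProduct_sub] at h
        linarith
      have hVkk : Vk k t₁ = x t₁ ⬝ᵥ (S T (ρ t₁) *ᵥ x t₁) := by
        simp only [hVkdef]
        have h : t₁ - (k:ℝ)*T = T := by rw [ht₁def]; ring
        rw [h]
      have ht₁mem : t₁ ∈ Ioc ((k:ℝ)*T) (((k:ℝ)+1)*T) := by
        constructor
        · rw [ht₁def]; nlinarith [hT]
        · rw [ht₁def]
      have hIH := ih t₁ ht₁mem
      calc g (k+1) t' ≤ Real.exp (ε/c₂*t₁) * (x t₁ ⬝ᵥ (S 0 (G t₁) *ᵥ x t₁)) := hlimle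
        _ ≤ Real.exp (ε/c₂*t₁) * (x t₁ ⬝ᵥ (S T (ρ t₁) *ᵥ x t₁)) :=
            mul_le_mul_of_nonneg_left hjmp (Real.exp_pos _).le
        _ = g k t₁ := by
            simp only [hgdef]; rw [hVkk]
        _ ≤ c₂ * (x 0 ⬝ᵥ x 0) := hIH

  -- conclusion
  rcases eq_or_lt_of_le ht with heq | htpos
  · rw [← heq]
    have h1 : (1:ℝ) ≤ Real.sqrt (c₂/c₁) := by
      rw [show (1:ℝ) = Real.sqrt 1 by simp]
      exact Real.sqrt_le_sqrt ((one_le_div hc₁pos).2 hc₁c₂)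
    have := mul_le_mul_of_nonneg_right h1 (Real.sqrt_nonneg (x 0 ⬝ᵥ x 0))
    simpa using this
  · have hm1 : 1 ≤ ⌈t/T⌉₊ := by
      rw [Nat.one_le_ceil_iff]
      positivity
    set K : ℕ := ⌈t/T⌉₊ - 1 with hKdef
    have hKceil : (K:ℝ) = (⌈t/T⌉₊ : ℝ) - 1 := by
      rw [hKdef]; push_cast [Nat.cast_sub hm1]; ring
    have hK1 : (K:ℝ) < t/T := by
      have h : K < ⌈t/T⌉₊ := by omega
      exact Nat.lt_ceil.mp h
    have hK2 : t/T ≤ (K:ℝ)+1 := by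
      have h := Nat.le_ceil (t/T)
      rw [hKceil]; linarith
    have htmem : t ∈ Ioc ((K:ℝ)*T) (((K:ℝ)+1)*T) := by
      constructor
      · calc (K:ℝ)*T < (t/T)*T := mul_lt_mul_of_pos_right hK1 hT
          _ = t := div_mul_cancel₀ t hT.ne'
      · calc t = (t/T)*T := (div_mul_cancel₀ t hT.ne').symm
          _ ≤ ((K:ℝ)+1)*T := mul_le_mul_of_nonneg_right hK2 hT.le
    have hJt := hJ K t htmem
    have hτmem : t - (K:ℝ)*T ∈ Icc (0:ℝ) T := ⟨by linarith [htmem.1], by linarith [htmem.2]⟩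
    have hlow : c₁ * (x t ⬝ᵥ x t) ≤ Vk K t := by
      have h := hquad_lo _ hτmem (ρ t) (hρP t ht) (x t)
      simpa [hVkdef] using h
    have hexp_pos : (0:ℝ) < Real.exp (ε/c₂*t) := Real.exp_pos _
    have hVle : Vk K t ≤ Real.exp (-(ε/c₂*t)) * (c₂ * (x 0 ⬝ᵥ x 0)) := by
      rw [Real.exp_neg, inv_mul_eq_div, le_div_iff₀ hexp_pos]
      have hgJ : Real.exp (ε/c₂*t) * Vk K t ≤ c₂ * (x 0 ⬝ᵥ x 0) := hJt
      linarith [hgJ, mul_comm (Vk K t) (Real.exp (ε/c₂*t))]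
    have hX : x t ⬝ᵥ x t ≤ (c₂/c₁) * (Real.exp (-(ε/c₂*t)) * (x 0 ⬝ᵥ x 0)) := by
      have h1 : c₁ * (x t ⬝ᵥ x t) ≤ Real.exp (-(ε/c₂*t)) * (c₂ * (x 0 ⬝ᵥ x 0)) :=
        le_trans hlow hVle
      rw [div_mul_eq_mul_div, le_div_iff₀ hc₁pos]
      nlinarith [h1]
    have hsqrt := Real.sqrt_le_sqrt hX
    have hrhs : Real.sqrt ((c₂/c₁) * (Real.exp (-(ε/c₂*t)) * (x 0 ⬝ᵥ x 0)))
        = Real.sqrt (c₂/c₁) * Real.exp (-(ε/(2*c₂))*t) * Real.sqrt (x 0 ⬝ᵥ x 0) := by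
      rw [Real.sqrt_mul (by positivity : (0:ℝ) ≤ c₂/c₁),
        Real.sqrt_mul (Real.exp_nonneg _), ← Real.exp_half]
      have harg : -(ε/c₂*t)/2 = -(ε/(2*c₂))*t := by ring
      rw [harg]
      ring
    rw [hrhs] at hsqrt
    exact hsqrt
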